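/- The Lie algebra sp(Cl(1,3)) = iCl^R_1(1,3) ⊕ Cl^R_2(1,3) is isomorphic as a real Lie algebra to sp(4,ℝ) = {u ∈ Mat(4,ℝ) : uᵀJ = −Ju}, where J = [[0,−I₂],[I₂,0]]. -/

import Mathlib

open CliffordAlgebra

noncomputable def Q13 : QuadraticForm ℂ (Fin 4 → ℂ) :=
  QuadraticMap.weightedSumSquares ℂ (fun a : Fin 4 => if a = 0 then (1 : ℂ) else -1)

noncomputable def e (a : Fin 4) : CliffordAlgebra Q13 := ι Q13 (Pi.single a 1)

noncomputable def blade (s : Finset (Fin 4)) : CliffordAlgebra Q13 :=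
  ((s.sort (· ≤ ·)).map e).prod

/-- The real subspace sp(Cl(1,3)) = iCl^ℝ_1(1,3) ⊕ Cl^ℝ_2(1,3). -/
noncomputable def spCl : Submodule ℝ (CliffordAlgebra Q13) :=
  Submodule.span ℝ
    (((fun x => (Complex.I : ℂ) • x) '' (blade '' {s | s.card = 1})) ∪
      (blade '' {s | s.card = 2}))

/-- The symplectic matrix J = [[0,−I₂],[I₂,0]]. -/
def Jmat : Matrix (Fin 4) (Fin 4) ℝ :=
  !![0,0,-1,0; 0,0,0,-1; 1,0,0,0; 0,1,0,0]

/-- The symplectic Lie algebra sp(4,ℝ) = {u : uᵀJ = −Ju}. -/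
def spMat : Set (Matrix (Fin 4) (Fin 4) ℝ) :=
  {u | u.transpose * Jmat = -(Jmat * u)}

namespace SpAux

open Matrix Complex

/-- Majorana-type gamma matrices (purely imaginary), adapted to `Jmat`. -/
noncomputable def G : Fin 4 → Matrix (Fin 4) (Fin 4) ℂ :=
  ![!![0,0,-I,0; 0,0,0,-I; I,0,0,0; 0,I,0,0],
    !![0,0,0,I; 0,0,I,0; 0,I,0,0; I,0,0,0],
    !![0,0,-I,0; 0,0,0,I; -I,0,0,0; 0,I,0,0],
    !![I,0,0,0; 0,I,0,0; 0,0,-I,0; 0,0,0,-I]]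

noncomputable def φ : (Fin 4 → ℂ) →ₗ[ℂ] Matrix (Fin 4) (Fin 4) ℂ where
  toFun v := v 0 • G 0 + v 1 • G 1 + v 2 • G 2 + v 3 • G 3
  map_add' x y := by
    simp only [Pi.add_apply, add_smul]
    abel
  map_smul' c x := by
    simp only [Pi.smul_apply, smul_eq_mul, RingHom.id_apply, smul_add, smul_smul]

set_option maxHeartbeats 1000000 in
theorem hφ (v : Fin 4 → ℂ) :
    φ v * φ v = algebraMap ℂ (Matrix (Fin 4) (Fin 4) ℂ) (Q13 v) := by
  have hq : Q13 v = v 0 * v 0 - v 1 * v 1 - v 2 * v 2 - v 3 * v 3 := by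
    simp [Q13, QuadraticMap.weightedSumSquares_apply, Fin.sum_univ_four]
    ring
  rw [hq]
  have hv : φ v =
      !![v 3 * I, 0, -(v 0 * I) - v 2 * I, v 1 * I;
         0, v 3 * I, v 1 * I, -(v 0 * I) + v 2 * I;
         v 0 * I - v 2 * I, v 1 * I, -(v 3 * I), 0;
         v 1 * I, v 0 * I + v 2 * I, 0, -(v 3 * I)] := by
    show v 0 • G 0 + v 1 • G 1 + v 2 • G 2 + v 3 • G 3 = _
    ext i j
    fin_cases i <;> fin_cases j <;>
      simp [G, Matrix.vecHead, Matrix.vecTail] <;> ring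
  rw [hv]
  ext i j
  fin_cases i <;> fin_cases j <;>
    simp [Matrix.mul_apply, Fin.sum_univ_four, Matrix.algebraMap_matrix_apply,
      Matrix.vecHead, Matrix.vecTail] <;>
    (try ring_nf) <;> (try simp [Complex.I_sq]) <;> (try ring_nf)

noncomputable def ρ : CliffordAlgebra Q13 →ₐ[ℂ] Matrix (Fin 4) (Fin 4) ℂ :=
  CliffordAlgebra.lift Q13 ⟨φ, hφ⟩

theorem hρe (a : Fin 4) : ρ (e a) = G a := by
  rw [e, ρ, CliffordAlgebra.lift_ι_apply]
  show (Pi.single a 1 : Fin 4 → ℂ) 0 • G 0 + (Pi.single a 1 : Fin 4 → ℂ) 1 • G 1 +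
    (Pi.single a 1 : Fin 4 → ℂ) 2 • G 2 + (Pi.single a 1 : Fin 4 → ℂ) 3 • G 3 = G a
  fin_cases a <;> simp [Pi.single_apply]

/-- Generators of `spCl`. -/
noncomputable def g : Fin 10 → CliffordAlgebra Q13 :=
  ![(Complex.I : ℂ) • e 0, (Complex.I : ℂ) • e 1, (Complex.I : ℂ) • e 2, (Complex.I : ℂ) • e 3,
    e 0 * e 1, e 0 * e 2, e 0 * e 3, e 1 * e 2, e 1 * e 3, e 2 * e 3]

/-- Images of the generators: a basis of sp(4,ℝ). -/
def m : Fin 10 → Matrix (Fin 4) (Fin 4) ℝ :=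
  ![!![0,0,1,0; 0,0,0,1; -1,0,0,0; 0,-1,0,0],
    !![0,0,0,-1; 0,0,-1,0; 0,-1,0,0; -1,0,0,0],
    !![0,0,1,0; 0,0,0,-1; 1,0,0,0; 0,-1,0,0],
    !![-1,0,0,0; 0,-1,0,0; 0,0,1,0; 0,0,0,1],
    !![0,1,0,0; 1,0,0,0; 0,0,0,-1; 0,0,-1,0],
    !![-1,0,0,0; 0,1,0,0; 0,0,1,0; 0,0,0,-1],
    !![0,0,-1,0; 0,0,0,-1; -1,0,0,0; 0,-1,0,0],
    !![0,-1,0,0; 1,0,0,0; 0,0,0,-1; 0,0,1,0],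
    !![0,0,0,1; 0,0,1,0; 0,-1,0,0; -1,0,0,0],
    !![0,0,-1,0; 0,0,0,1; 1,0,0,0; 0,-1,0,0]]

noncomputable def toC : Matrix (Fin 4) (Fin 4) ℝ →ₗ[ℝ] Matrix (Fin 4) (Fin 4) ℂ where
  toFun A := A.map (algebraMap ℝ ℂ)
  map_add' A B := by ext i j; simp
  map_smul' c A := by
    ext i j
    simp [Matrix.map_apply, Complex.real_smul]

noncomputable def reMap : Matrix (Fin 4) (Fin 4) ℂ →ₗ[ℝ] Matrix (Fin 4) (Fin 4) ℝ where
  toFun A := A.map Complex.re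
  map_add' A B := by ext i j; simp
  map_smul' c A := by ext i j; simp [Complex.real_smul]

theorem reMap_toC (A : Matrix (Fin 4) (Fin 4) ℝ) : reMap (toC A) = A := by
  ext i j
  show (((A.map (algebraMap ℝ ℂ)).map Complex.re) : Matrix (Fin 4) (Fin 4) ℝ) i j = A i j
  simp [Matrix.map_apply]

theorem toC_mul (A B : Matrix (Fin 4) (Fin 4) ℝ) : toC A * toC B = toC (A * B) := by
  show A.map (algebraMap ℝ ℂ) * B.map (algebraMap ℝ ℂ) = (A * B).map (algebraMap ℝ ℂ)
  exact (Matrix.map_mul).symm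

noncomputable def ρr : CliffordAlgebra Q13 →ₗ[ℝ] Matrix (Fin 4) (Fin 4) ℂ :=
  ρ.toLinearMap.restrictScalars ℝ

noncomputable def f : CliffordAlgebra Q13 →ₗ[ℝ] Matrix (Fin 4) (Fin 4) ℝ :=
  reMap.comp ρr

set_option maxHeartbeats 1000000 in
theorem hgC (i : Fin 10) : ρr (g i) = toC (m i) := by
  have hse : ∀ a : Fin 4, ρ ((Complex.I : ℂ) • e a) = Complex.I • G a := fun a => by
    rw [_root_.map_smul, hρe]
  have hpe : ∀ a b : Fin 4, ρ (e a * e b) = G a * G b := fun a b => by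
    rw [_root_.map_mul, hρe, hρe]
  fin_cases i
  · show ρ ((Complex.I : ℂ) • e 0) = toC !![0,0,1,0; 0,0,0,1; -1,0,0,0; 0,-1,0,0]
    rw [hse]
    ext p q
    fin_cases p <;> fin_cases q <;>
      simp [G, toC, Complex.ext_iff, Matrix.vecHead, Matrix.vecTail]
  · show ρ ((Complex.I : ℂ) • e 1) = toC !![0,0,0,-1; 0,0,-1,0; 0,-1,0,0; -1,0,0,0]
    rw [hse]
    ext p q
    fin_cases p <;> fin_cases q <;>
      simp [G, toC, Complex.ext_iff, Matrix.vecHead, Matrix.vecTail]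
  · show ρ ((Complex.I : ℂ) • e 2) = toC !![0,0,1,0; 0,0,0,-1; 1,0,0,0; 0,-1,0,0]
    rw [hse]
    ext p q
    fin_cases p <;> fin_cases q <;>
      simp [G, toC, Complex.ext_iff, Matrix.vecHead, Matrix.vecTail]
  · show ρ ((Complex.I : ℂ) • e 3) = toC !![-1,0,0,0; 0,-1,0,0; 0,0,1,0; 0,0,0,1]
    rw [hse]
    ext p q
    fin_cases p <;> fin_cases q <;>
      simp [G, toC, Complex.ext_iff, Matrix.vecHead, Matrix.vecTail]
  · show ρ (e 0 * e 1) = toC !![0,1,0,0; 1,0,0,0; 0,0,0,-1; 0,0,-1,0]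
    rw [hpe]
    ext p q
    fin_cases p <;> fin_cases q <;>
      simp [G, toC, Matrix.mul_apply, Fin.sum_univ_four, Complex.ext_iff,
        Matrix.vecHead, Matrix.vecTail]
  · show ρ (e 0 * e 2) = toC !![-1,0,0,0; 0,1,0,0; 0,0,1,0; 0,0,0,-1]
    rw [hpe]
    ext p q
    fin_cases p <;> fin_cases q <;>
      simp [G, toC, Matrix.mul_apply, Fin.sum_univ_four, Complex.ext_iff,
        Matrix.vecHead, Matrix.vecTail]
  · show ρ (e 0 * e 3) = toC !![0,0,-1,0; 0,0,0,-1; -1,0,0,0; 0,-1,0,0]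
    rw [hpe]
    ext p q
    fin_cases p <;> fin_cases q <;>
      simp [G, toC, Matrix.mul_apply, Fin.sum_univ_four, Complex.ext_iff,
        Matrix.vecHead, Matrix.vecTail]
  · show ρ (e 1 * e 2) = toC !![0,-1,0,0; 1,0,0,0; 0,0,0,-1; 0,0,1,0]
    rw [hpe]
    ext p q
    fin_cases p <;> fin_cases q <;>
      simp [G, toC, Matrix.mul_apply, Fin.sum_univ_four, Complex.ext_iff,
        Matrix.vecHead, Matrix.vecTail]
  · show ρ (e 1 * e 3) = toC !![0,0,0,1; 0,0,1,0; 0,-1,0,0; -1,0,0,0]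
    rw [hpe]
    ext p q
    fin_cases p <;> fin_cases q <;>
      simp [G, toC, Matrix.mul_apply, Fin.sum_univ_four, Complex.ext_iff,
        Matrix.vecHead, Matrix.vecTail]
  · show ρ (e 2 * e 3) = toC !![0,0,-1,0; 0,0,0,1; 1,0,0,0; 0,-1,0,0]
    rw [hpe]
    ext p q
    fin_cases p <;> fin_cases q <;>
      simp [G, toC, Matrix.mul_apply, Fin.sum_univ_four, Complex.ext_iff,
        Matrix.vecHead, Matrix.vecTail]

theorem hfg (i : Fin 10) : f (g i) = m i := by
  show reMap (ρr (g i)) = m i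
  rw [hgC, reMap_toC]

theorem card_one_cases : ∀ s : Finset (Fin 4), s.card = 1 →
    s = {0} ∨ s = {1} ∨ s = {2} ∨ s = {3} := by decide

theorem card_two_cases : ∀ s : Finset (Fin 4), s.card = 2 →
    s = {0,1} ∨ s = {0,2} ∨ s = {0,3} ∨ s = {1,2} ∨ s = {1,3} ∨ s = {2,3} := by decide

theorem blade_singleton (a : Fin 4) : blade {a} = e a := by
  simp [blade, Finset.sort_singleton]

theorem blade_pair (a b : Fin 4) (hab : a < b) : blade {a, b} = e a * e b := by
  rw [blade, Finset.sort_insert]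
  · simp [Finset.sort_singleton]
  · intro c hc
    simp only [Finset.mem_singleton] at hc
    subst hc
    exact le_of_lt hab
  · simp only [Finset.mem_singleton]
    exact Fin.ne_of_lt hab

theorem hspan : spCl = Submodule.span ℝ (Set.range g) := by
  apply le_antisymm
  · rw [spCl]
    apply Submodule.span_le.2
    rintro x (⟨y, ⟨s, hs, rfl⟩, rfl⟩ | ⟨s, hs, rfl⟩)
    · rcases card_one_cases s hs with rfl | rfl | rfl | rfl
      · exact Submodule.subset_span ⟨0, by simp [g, blade_singleton]⟩
      · exact Submodule.subset_span ⟨1, by simp [g, blade_singleton]⟩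
      · exact Submodule.subset_span ⟨2, by simp [g, blade_singleton]⟩
      · exact Submodule.subset_span ⟨3, by simp [g, blade_singleton]⟩
    · rcases card_two_cases s hs with rfl | rfl | rfl | rfl | rfl | rfl
      · exact Submodule.subset_span ⟨4, by rw [blade_pair _ _ (by decide)]; rfl⟩
      · exact Submodule.subset_span ⟨5, by rw [blade_pair _ _ (by decide)]; rfl⟩
      · exact Submodule.subset_span ⟨6, by rw [blade_pair _ _ (by decide)]; rfl⟩
      · exact Submodule.subset_span ⟨7, by rw [blade_pair _ _ (by decide)]; rfl⟩
      · exact Submodule.subset_span ⟨8, by rw [blade_pair _ _ (by decide)]; rfl⟩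
      · exact Submodule.subset_span ⟨9, by rw [blade_pair _ _ (by decide)]; rfl⟩
  · apply Submodule.span_le.2
    rintro x ⟨i, rfl⟩
    apply Submodule.subset_span
    fin_cases i
    · exact Or.inl ⟨blade {0}, ⟨{0}, by simp, rfl⟩, by rw [blade_singleton]; rfl⟩
    · exact Or.inl ⟨blade {1}, ⟨{1}, by simp, rfl⟩, by rw [blade_singleton]; rfl⟩
    · exact Or.inl ⟨blade {2}, ⟨{2}, by simp, rfl⟩, by rw [blade_singleton]; rfl⟩
    · exact Or.inl ⟨blade {3}, ⟨{3}, by simp, rfl⟩, by rw [blade_singleton]; rfl⟩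
    · exact Or.inr ⟨{0,1}, by simp, by rw [blade_pair _ _ (by decide)]; rfl⟩
    · exact Or.inr ⟨{0,2}, by simp, by rw [blade_pair _ _ (by decide)]; rfl⟩
    · exact Or.inr ⟨{0,3}, by simp, by rw [blade_pair _ _ (by decide)]; rfl⟩
    · exact Or.inr ⟨{1,2}, by simp, by rw [blade_pair _ _ (by decide)]; rfl⟩
    · exact Or.inr ⟨{1,3}, by simp, by rw [blade_pair _ _ (by decide)]; rfl⟩
    · exact Or.inr ⟨{2,3}, by simp, by rw [blade_pair _ _ (by decide)]; rfl⟩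

theorem vec10_five {α : Type*} (a0 a1 a2 a3 a4 a5 a6 a7 a8 a9 : α) :
    ![a0,a1,a2,a3,a4,a5,a6,a7,a8,a9] (5 : Fin 10) = a5 := rfl

theorem vec10_six {α : Type*} (a0 a1 a2 a3 a4 a5 a6 a7 a8 a9 : α) :
    ![a0,a1,a2,a3,a4,a5,a6,a7,a8,a9] (6 : Fin 10) = a6 := rfl

theorem vec10_seven {α : Type*} (a0 a1 a2 a3 a4 a5 a6 a7 a8 a9 : α) :
    ![a0,a1,a2,a3,a4,a5,a6,a7,a8,a9] (7 : Fin 10) = a7 := rfl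

theorem vec10_eight {α : Type*} (a0 a1 a2 a3 a4 a5 a6 a7 a8 a9 : α) :
    ![a0,a1,a2,a3,a4,a5,a6,a7,a8,a9] (8 : Fin 10) = a8 := rfl

theorem vec10_nine {α : Type*} (a0 a1 a2 a3 a4 a5 a6 a7 a8 a9 : α) :
    ![a0,a1,a2,a3,a4,a5,a6,a7,a8,a9] (9 : Fin 10) = a9 := rfl

theorem sum10 {M : Type*} [AddCommMonoid M] (h : Fin 10 → M) :
    ∑ i, h i = h 0 + h 1 + h 2 + h 3 + h 4 + h 5 + h 6 + h 7 + h 8 + h 9 := by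
  rw [Fin.sum_univ_succ, Fin.sum_univ_succ, Fin.sum_univ_succ, Fin.sum_univ_succ,
    Fin.sum_univ_succ, Fin.sum_univ_succ, Fin.sum_univ_succ, Fin.sum_univ_succ,
    Fin.sum_univ_succ, Fin.sum_univ_one]
  show h 0 + (h 1 + (h 2 + (h 3 + (h 4 + (h 5 + (h 6 + (h 7 + (h 8 + h 9)))))))) = _
  abel

theorem f_sum (c : Fin 10 → ℝ) : f (∑ i, c i • g i) = ∑ i, c i • m i := by
  rw [map_sum]
  exact Finset.sum_congr rfl fun i _ => by rw [_root_.map_smul, hfg]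

theorem ρr_sum (c : Fin 10 → ℝ) : ρr (∑ i, c i • g i) = toC (∑ i, c i • m i) := by
  rw [map_sum, map_sum]
  exact Finset.sum_congr rfl fun i _ => by rw [_root_.map_smul, hgC, _root_.map_smul]

theorem key (x : CliffordAlgebra Q13) (hx : x ∈ spCl) : ρr x = toC (f x) := by
  rw [hspan] at hx
  obtain ⟨c, rfl⟩ := (Submodule.mem_span_range_iff_exists_fun ℝ).mp hx
  erw [ρr_sum, f_sum]

theorem hm0 : (!![0,0,1,0; 0,0,0,1; -1,0,0,0; 0,-1,0,0] : Matrix (Fin 4) (Fin 4) ℝ) ∈ spMat := by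
  show _ = _
  ext p q
  fin_cases p <;> fin_cases q <;>
    simp [Jmat, Matrix.mul_apply, Fin.sum_univ_four, Matrix.vecHead, Matrix.vecTail]

theorem hm1 : (!![0,0,0,-1; 0,0,-1,0; 0,-1,0,0; -1,0,0,0] : Matrix (Fin 4) (Fin 4) ℝ) ∈ spMat := by
  show _ = _
  ext p q
  fin_cases p <;> fin_cases q <;>
    simp [Jmat, Matrix.mul_apply, Fin.sum_univ_four, Matrix.vecHead, Matrix.vecTail]

theorem hm2 : (!![0,0,1,0; 0,0,0,-1; 1,0,0,0; 0,-1,0,0] : Matrix (Fin 4) (Fin 4) ℝ) ∈ spMat := by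
  show _ = _
  ext p q
  fin_cases p <;> fin_cases q <;>
    simp [Jmat, Matrix.mul_apply, Fin.sum_univ_four, Matrix.vecHead, Matrix.vecTail]

theorem hm3 : (!![-1,0,0,0; 0,-1,0,0; 0,0,1,0; 0,0,0,1] : Matrix (Fin 4) (Fin 4) ℝ) ∈ spMat := by
  show _ = _
  ext p q
  fin_cases p <;> fin_cases q <;>
    simp [Jmat, Matrix.mul_apply, Fin.sum_univ_four, Matrix.vecHead, Matrix.vecTail]

theorem hm4 : (!![0,1,0,0; 1,0,0,0; 0,0,0,-1; 0,0,-1,0] : Matrix (Fin 4) (Fin 4) ℝ) ∈ spMat := by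
  show _ = _
  ext p q
  fin_cases p <;> fin_cases q <;>
    simp [Jmat, Matrix.mul_apply, Fin.sum_univ_four, Matrix.vecHead, Matrix.vecTail]

theorem hm5 : (!![-1,0,0,0; 0,1,0,0; 0,0,1,0; 0,0,0,-1] : Matrix (Fin 4) (Fin 4) ℝ) ∈ spMat := by
  show _ = _
  ext p q
  fin_cases p <;> fin_cases q <;>
    simp [Jmat, Matrix.mul_apply, Fin.sum_univ_four, Matrix.vecHead, Matrix.vecTail]

theorem hm6 : (!![0,0,-1,0; 0,0,0,-1; -1,0,0,0; 0,-1,0,0] : Matrix (Fin 4) (Fin 4) ℝ) ∈ spMat := by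
  show _ = _
  ext p q
  fin_cases p <;> fin_cases q <;>
    simp [Jmat, Matrix.mul_apply, Fin.sum_univ_four, Matrix.vecHead, Matrix.vecTail]

theorem hm7 : (!![0,-1,0,0; 1,0,0,0; 0,0,0,-1; 0,0,1,0] : Matrix (Fin 4) (Fin 4) ℝ) ∈ spMat := by
  show _ = _
  ext p q
  fin_cases p <;> fin_cases q <;>
    simp [Jmat, Matrix.mul_apply, Fin.sum_univ_four, Matrix.vecHead, Matrix.vecTail]

theorem hm8 : (!![0,0,0,1; 0,0,1,0; 0,-1,0,0; -1,0,0,0] : Matrix (Fin 4) (Fin 4) ℝ) ∈ spMat := by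
  show _ = _
  ext p q
  fin_cases p <;> fin_cases q <;>
    simp [Jmat, Matrix.mul_apply, Fin.sum_univ_four, Matrix.vecHead, Matrix.vecTail]

theorem hm9 : (!![0,0,-1,0; 0,0,0,1; 1,0,0,0; 0,-1,0,0] : Matrix (Fin 4) (Fin 4) ℝ) ∈ spMat := by
  show _ = _
  ext p q
  fin_cases p <;> fin_cases q <;>
    simp [Jmat, Matrix.mul_apply, Fin.sum_univ_four, Matrix.vecHead, Matrix.vecTail]

theorem hm (i : Fin 10) : m i ∈ spMat := by
  fin_cases i
  · exact hm0
  · exact hm1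
  · exact hm2
  · exact hm3
  · exact hm4
  · exact hm5
  · exact hm6
  · exact hm7
  · exact hm8
  · exact hm9

end SpAux

set_option maxHeartbeats 4000000 in
open SpAux Matrix in
/-- The Lie algebra sp(Cl(1,3)) is isomorphic, as a real Lie algebra,
to the matrix Lie algebra sp(4,ℝ). -/
theorem spCl_iso_sp4 :
    ∃ f : CliffordAlgebra Q13 →ₗ[ℝ] Matrix (Fin 4) (Fin 4) ℝ,
      Set.BijOn f (spCl : Set (CliffordAlgebra Q13)) spMat ∧
      ∀ u ∈ spCl, ∀ v ∈ spCl, f (u * v - v * u) = f u * f v - f v * f u := by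
  refine ⟨SpAux.f, ⟨?_, ?_, ?_⟩, ?_⟩
  · -- MapsTo
    intro x hx
    rw [hspan] at hx
    obtain ⟨c, rfl⟩ := (Submodule.mem_span_range_iff_exists_fun ℝ).mp hx
    erw [f_sum]
    show (∑ i, c i • m i)ᵀ * Jmat = -(Jmat * ∑ i, c i • m i)
    rw [Matrix.transpose_sum, Finset.sum_mul, Matrix.mul_sum, ← Finset.sum_neg_distrib]
    refine Finset.sum_congr rfl fun i _ => ?_
    rw [Matrix.transpose_smul, Matrix.smul_mul, Matrix.mul_smul, ← smul_neg]
    congr 1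
    exact hm i
  · -- InjOn
    intro x hx y hy hxy
    rw [hspan] at hx hy
    obtain ⟨a, rfl⟩ := (Submodule.mem_span_range_iff_exists_fun ℝ).mp hx
    obtain ⟨b, rfl⟩ := (Submodule.mem_span_range_iff_exists_fun ℝ).mp hy
    erw [f_sum, f_sum] at hxy
    have H : ∀ p q : Fin 4, (∑ i, a i * m i p q) = ∑ i, b i * m i p q := by
      intro p q
      have h := congrFun (congrFun hxy p) q
      simpa [Matrix.sum_apply] using h
    have h00 := H 0 0
    have h11 := H 1 1
    have h01 := H 0 1
    have h10 := H 1 0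
    have h03 := H 0 3
    have h21 := H 2 1
    have h02 := H 0 2
    have h13 := H 1 3
    have h20 := H 2 0
    have h31 := H 3 1
    simp [sum10, m, vec10_five, vec10_six, vec10_seven, vec10_eight, vec10_nine,
      Matrix.vecHead, Matrix.vecTail] at h00 h11 h01 h10 h03 h21 h02 h13 h20 h31
    have hab : a = b := by
      funext i
      fin_cases i <;> simp <;> linarith
    rw [hab]
  · -- SurjOn
    intro u hu
    have h1 := congrFun (congrFun hu 0) 1
    have h2 := congrFun (congrFun hu 0) 2
    have h3 := congrFun (congrFun hu 0) 3
    have h4 := congrFun (congrFun hu 1) 2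
    have h5 := congrFun (congrFun hu 1) 3
    have h6 := congrFun (congrFun hu 2) 3
    simp [Jmat, Matrix.mul_apply, Matrix.vecMul, dotProduct, Fin.sum_univ_four,
      Matrix.vecHead, Matrix.vecTail] at h1 h2 h3 h4 h5 h6
    refine ⟨∑ i, (![(u 0 2 + u 1 3 - u 2 0 - u 3 1)/4,
        -(u 0 3 + u 2 1)/2,
        (u 0 2 - u 1 3 + u 2 0 - u 3 1)/4,
        -(u 0 0 + u 1 1)/2,
        (u 0 1 + u 1 0)/2,
        (-(u 0 0) + u 1 1)/2,
        -(u 0 2 + u 1 3 + u 2 0 + u 3 1)/4,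
        (-(u 0 1) + u 1 0)/2,
        (u 0 3 - u 2 1)/2,
        (-(u 0 2) + u 1 3 + u 2 0 - u 3 1)/4] : Fin 10 → ℝ) i • g i, ?_, ?_⟩
    · rw [hspan]
      exact Submodule.sum_mem _ fun i _ =>
        Submodule.smul_mem _ _ (Submodule.subset_span ⟨i, rfl⟩)
    · rw [f_sum]
      ext p q
      fin_cases p <;> fin_cases q <;>
        · simp [Matrix.sum_apply, sum10, m, vec10_five, vec10_six, vec10_seven, vec10_eight,
            vec10_nine, Matrix.vecHead, Matrix.vecTail]
          linarith
  · -- Lie bracket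
    intro u hu v hv
    have hmul : ρr (u * v - v * u) = ρr u * ρr v - ρr v * ρr u := by
      show ρ (u * v - v * u) = ρ u * ρ v - ρ v * ρ u
      rw [map_sub, _root_.map_mul, _root_.map_mul]
    show reMap (ρr (u * v - v * u)) = _
    rw [hmul, key u hu, key v hv, toC_mul, toC_mul, ← map_sub, reMap_toC]
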